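/- Let n = 2k+1 with k ≥ 1 and let 1 ≤ r ≤ k. Consider the linear map Φ sending each assignment g of real numbers to the r-subsets of S satisfying the constraints to the vector (f(A))_A indexed by the subsets A of S with |A| = k or |A| = k+1, where f(A) = ∑_{B ⊆ A, |B| = r} g(B). Then the image of Φ is a vector space of dimension C(n, r) − C(n, r−1); equivalently, Φ is injective on the constraint space. -/

import Mathlib

open Finset

/-- Vertices of the middle-cube `M_n` (with `n = 2k+1`): subsets of `S = {1,…,n}`
(modeled as `Fin n`) of cardinality `k` or `k+1`. -/
abbrev MidVert (n k : ℕ) := {A : Finset (Fin n) // A.card = k ∨ A.card = k + 1}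

/-- The space of assignments `g` of real numbers to the `r`-subsets of `S = {1,…,n}`
satisfying, for every `(r−1)`-subset `R` of `S`, `∑_{i ∈ S∖R} g(R ∪ {i}) = 0`. -/
def constraintSpace (n r : ℕ) (hr : 1 ≤ r) :
    Submodule ℝ ({A : Finset (Fin n) // A.card = r} → ℝ) where
  carrier := {g | ∀ R : Finset (Fin n), ∀ hR : R.card = r - 1,
    ∑ i ∈ Rᶜ.attach, g ⟨insert i.1 R, by
      have hi : (i : Fin n) ∉ R := Finset.mem_compl.mp i.2
      rw [Finset.card_insert_of_notMem hi, hR]; omega⟩ = 0}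
  add_mem' := by
    intro a b ha hb R hR
    simpa [Finset.sum_add_distrib] using by rw [ha R hR, hb R hR, add_zero]
  zero_mem' := by intro R hR; simp
  smul_mem' := by
    intro c a ha R hR
    simpa [← Finset.mul_sum] using Or.inr (ha R hR)

/-- The linear map `Φ` sending an assignment `g` on the `r`-subsets of `S` to the
vector `(f(A))_A` indexed by the vertices of the middle-cube, where
`f(A) = ∑_{B ⊆ A, |B| = r} g(B)`. -/
def Phi (n k r : ℕ) :
    ({A : Finset (Fin n) // A.card = r} → ℝ) →ₗ[ℝ] (MidVert n k → ℝ) where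
  toFun g := fun A => ∑ B ∈ (A.1.powersetCard r).attach,
    g ⟨B.1, (Finset.mem_powersetCard.mp B.2).2⟩
  map_add' := by intro a b; funext A; simp [Finset.sum_add_distrib]
  map_smul' := by intro c a; funext A; simp [Finset.mul_sum]

namespace MidProof

variable {n : ℕ}

/-- Down operator on plain set functions. -/
noncomputable def dn (F : Finset (Fin n) → ℝ) : Finset (Fin n) → ℝ :=
  fun R => ∑ i ∈ Rᶜ, F (insert i R)

/-- Up operator on plain set functions. -/
noncomputable def up (F : Finset (Fin n) → ℝ) : Finset (Fin n) → ℝ :=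
  fun A => ∑ i ∈ A, F (A.erase i)

lemma pair_swap (s : Finset (Fin n)) (j : ℕ) (H : Finset (Fin n) → Fin n → ℝ) :
    ∑ C ∈ s.powersetCard j, ∑ i ∈ s \ C, H (insert i C) i
      = ∑ B ∈ s.powersetCard (j+1), ∑ i ∈ B, H B i := by
  rw [Finset.sum_sigma' (s.powersetCard j) (fun C => s \ C) (fun C i => H (insert i C) i),
      Finset.sum_sigma' (s.powersetCard (j+1)) (fun B => B) (fun B i => H B i)]
  refine Finset.sum_nbij' (fun x => ⟨insert x.2 x.1, x.2⟩) (fun y => ⟨y.1.erase y.2, y.2⟩)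
    ?_ ?_ ?_ ?_ ?_
  · rintro ⟨C, i⟩ hx
    simp only [mem_sigma, mem_powersetCard, mem_sdiff] at hx ⊢
    obtain ⟨⟨hCs, hCc⟩, his, hiC⟩ := hx
    exact ⟨⟨insert_subset his hCs, by rw [card_insert_of_notMem hiC, hCc]⟩, mem_insert_self _ _⟩
  · rintro ⟨B, i⟩ hy
    simp only [mem_sigma, mem_powersetCard, mem_sdiff] at hy ⊢
    obtain ⟨⟨hBs, hBc⟩, hiB⟩ := hy
    refine ⟨⟨(erase_subset _ _).trans hBs, ?_⟩, hBs hiB, notMem_erase _ _⟩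
    rw [card_erase_of_mem hiB, hBc]; rfl
  · rintro ⟨C, i⟩ hx
    simp only [mem_sigma, mem_powersetCard, mem_sdiff] at hx
    have : (insert i C).erase i = C := erase_insert hx.2.2
    simp [this]
  · rintro ⟨B, i⟩ hy
    simp only [mem_sigma, mem_powersetCard] at hy
    have : insert i (B.erase i) = B := insert_erase hy.2
    simp [this]
  · rintro ⟨C, i⟩ _; rfl

lemma adj (a : ℕ) (F G : Finset (Fin n) → ℝ) :
    ∑ A ∈ (univ : Finset (Fin n)).powersetCard (a+1), up F A * G A
      = ∑ R ∈ (univ : Finset (Fin n)).powersetCard a, F R * dn G R := by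
  calc ∑ A ∈ (univ : Finset (Fin n)).powersetCard (a+1), up F A * G A
      = ∑ B ∈ (univ : Finset (Fin n)).powersetCard (a+1), ∑ i ∈ B, F (B.erase i) * G B := by
        refine sum_congr rfl fun A _ => ?_
        rw [up, sum_mul]
    _ = ∑ C ∈ (univ : Finset (Fin n)).powersetCard a, ∑ i ∈ univ \ C,
          F ((insert i C).erase i) * G (insert i C) :=
        (pair_swap univ a (fun B i => F (B.erase i) * G B)).symm
    _ = ∑ R ∈ (univ : Finset (Fin n)).powersetCard a, F R * dn G R := by
        refine sum_congr rfl fun C _ => ?_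
        rw [dn, mul_sum, ← compl_eq_univ_sdiff]
        refine sum_congr rfl fun i hi => ?_
        rw [erase_insert (mem_compl.mp hi)]

lemma dn_up (F : Finset (Fin n) → ℝ) (R : Finset (Fin n)) :
    dn (up F) R = up (dn F) R + ((n:ℝ) - 2 * R.card) * F R := by
  have hcard : R.card ≤ n := by
    simpa using card_le_card (subset_univ R)
  have h1 : dn (up F) R
      = (Rᶜ.card : ℝ) * F R + ∑ i ∈ Rᶜ, ∑ l ∈ R, F (insert i (R.erase l)) := by
    rw [dn]
    have : ∀ i ∈ Rᶜ, up F (insert i R)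
        = F R + ∑ l ∈ R, F (insert i (R.erase l)) := by
      intro i hi
      have hiR : i ∉ R := mem_compl.mp hi
      rw [up, sum_insert hiR, erase_insert hiR]
      congr 1
      refine sum_congr rfl fun l hl => ?_
      exact congrArg F (erase_insert_of_ne (fun h => hiR (h ▸ hl)))
    rw [sum_congr rfl this, sum_add_distrib, sum_const, nsmul_eq_mul]
  have h2 : up (dn F) R
      = (R.card : ℝ) * F R + ∑ l ∈ R, ∑ i ∈ Rᶜ, F (insert i (R.erase l)) := by
    rw [up]
    have : ∀ l ∈ R, dn F (R.erase l)
        = F R + ∑ i ∈ Rᶜ, F (insert i (R.erase l)) := by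
      intro l hl
      rw [dn, compl_erase, sum_insert (by simp [hl]), insert_erase hl]
    rw [sum_congr rfl this, sum_add_distrib, sum_const, nsmul_eq_mul]
  rw [h1, h2, sum_comm]
  have hcc : (Rᶜ.card : ℝ) = (n : ℝ) - R.card := by
    rw [card_compl, Fintype.card_fin, Nat.cast_sub hcard]
  rw [hcc]; ring

end MidProof

namespace MidProof

variable {n : ℕ}

lemma up_inj (a : ℕ) (h2 : 2*a < n) (F : Finset (Fin n) → ℝ)
    (h0 : ∀ A : Finset (Fin n), A.card = a + 1 → up F A = 0) :
    ∀ R : Finset (Fin n), R.card = a → F R = 0 := by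
  have key : (0:ℝ) = (∑ R ∈ (univ : Finset (Fin n)).powersetCard a, F R * up (dn F) R)
      + ((n:ℝ) - 2*a) * ∑ R ∈ (univ : Finset (Fin n)).powersetCard a, F R * F R := by
    have e1 : ∑ A ∈ (univ : Finset (Fin n)).powersetCard (a+1), up F A * up F A = 0 :=
      sum_eq_zero fun A hA => by rw [h0 A (mem_powersetCard_univ.mp hA), zero_mul]
    rw [adj a F (up F)] at e1
    calc (0:ℝ) = ∑ R ∈ (univ : Finset (Fin n)).powersetCard a, F R * dn (up F) R := e1.symm
    _ = ∑ R ∈ (univ : Finset (Fin n)).powersetCard a,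
          (F R * up (dn F) R + ((n:ℝ)-2*a) * (F R * F R)) := by
        refine sum_congr rfl fun R hR => ?_
        rw [dn_up F R, mem_powersetCard_univ.mp hR]; ring
    _ = _ := by rw [sum_add_distrib, ← mul_sum]
  have hS1 : 0 ≤ ∑ R ∈ (univ : Finset (Fin n)).powersetCard a, F R * up (dn F) R := by
    rcases a with _ | b
    · refine le_of_eq (sum_eq_zero fun R hR => ?_).symm
      have : R = ∅ := card_eq_zero.mp (mem_powersetCard_univ.mp hR)
      subst this
      simp [up]
    · calc (0:ℝ) ≤ ∑ R ∈ (univ : Finset (Fin n)).powersetCard b, dn F R * dn F R :=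
            sum_nonneg fun _ _ => mul_self_nonneg _
      _ = ∑ A ∈ (univ : Finset (Fin n)).powersetCard (b+1), up (dn F) A * F A :=
            (adj b (dn F) F).symm
      _ = _ := sum_congr rfl fun _ _ => mul_comm _ _
  have hS2 : 0 ≤ ∑ R ∈ (univ : Finset (Fin n)).powersetCard a, F R * F R :=
    sum_nonneg fun _ _ => mul_self_nonneg _
  have hc : 0 < (n:ℝ) - 2*a := by
    have : ((2*a : ℕ) : ℝ) < (n : ℝ) := by exact_mod_cast h2
    push_cast at this; linarith
  have hS2z : ∑ R ∈ (univ : Finset (Fin n)).powersetCard a, F R * F R = 0 := by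
    nlinarith [key, hS1, hS2, hc]
  intro R hR
  exact mul_self_eq_zero.mp
    ((sum_eq_zero_iff_of_nonneg (fun x _ => mul_self_nonneg _)).mp hS2z R
      (mem_powersetCard_univ.mpr hR))

lemma dn_T (a : ℕ) (G : Finset (Fin n) → ℝ)
    (hG : ∀ C : Finset (Fin n), C.card = a → dn G C = 0) (R : Finset (Fin n)) :
    dn (fun A => ∑ B ∈ A.powersetCard (a+1), G B) R
      = ((n:ℝ) - R.card - (a+1)) * ∑ B ∈ R.powersetCard (a+1), G B := by
  have hcard : R.card ≤ n := by simpa using card_le_card (subset_univ R)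
  have step : ∀ i ∈ Rᶜ, ∑ B ∈ (insert i R).powersetCard (a+1), G B
      = (∑ B ∈ R.powersetCard (a+1), G B) + ∑ C ∈ R.powersetCard a, G (insert i C) := by
    intro i hi
    have hiR : i ∉ R := mem_compl.mp hi
    rw [powersetCard_succ_insert hiR, sum_union, sum_image]
    · intro C hC C' hC' hCC'
      have hC1 : i ∉ C := fun h => hiR ((mem_powersetCard.mp hC).1 h)
      have hC2 : i ∉ C' := fun h => hiR ((mem_powersetCard.mp hC').1 h)
      rw [← erase_insert hC1, ← erase_insert hC2, hCC']
    · rw [disjoint_left]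
      intro B hB hB'
      obtain ⟨C, _, rfl⟩ := mem_image.mp hB'
      exact hiR ((mem_powersetCard.mp hB).1 (mem_insert_self i C))
  rw [dn, sum_congr rfl step, sum_add_distrib, sum_const, nsmul_eq_mul, sum_comm]
  have inner : ∀ C ∈ R.powersetCard a, ∑ i ∈ Rᶜ, G (insert i C)
      = - ∑ i ∈ R \ C, G (insert i C) := by
    intro C hC
    obtain ⟨hCR, hCc⟩ := mem_powersetCard.mp hC
    have hsplit : Cᶜ = Rᶜ ∪ (R \ C) := by
      ext x
      simp only [mem_compl, mem_union, mem_sdiff]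
      constructor
      · intro hx
        by_cases hxR : x ∈ R
        · exact Or.inr ⟨hxR, hx⟩
        · exact Or.inl hxR
      · rintro (hx | ⟨_, hx⟩) h
        · exact hx (hCR h)
        · exact hx h
    have hdisj : Disjoint Rᶜ (R \ C) := by
      rw [disjoint_left]; intro x hx hx'
      exact (mem_compl.mp hx) (mem_sdiff.mp hx').1
    have := hG C hCc
    rw [dn, hsplit, sum_union hdisj] at this
    linarith
  rw [sum_congr rfl inner, sum_neg_distrib,
    pair_swap R a (fun B _ => G B)]
  have hlast : ∑ B ∈ R.powersetCard (a+1), ∑ _i ∈ B, G B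
      = ((a:ℝ)+1) * ∑ B ∈ R.powersetCard (a+1), G B := by
    rw [mul_sum]
    refine sum_congr rfl fun B hB => ?_
    rw [sum_const, nsmul_eq_mul, (mem_powersetCard.mp hB).2]
    push_cast; ring
  rw [hlast, card_compl, Fintype.card_fin, Nat.cast_sub hcard]
  ring

end MidProof

namespace MidProof

/-- Extension of a level function to all finsets by zero. -/
noncomputable def ext' {n j : ℕ} (g : {A : Finset (Fin n) // A.card = j} → ℝ) :
    Finset (Fin n) → ℝ :=
  fun A => if h : A.card = j then g ⟨A, h⟩ else 0

lemma ext'_add {n j : ℕ} (g g' : {A : Finset (Fin n) // A.card = j} → ℝ) :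
    ext' (g + g') = ext' g + ext' g' := by
  funext A; simp only [ext', Pi.add_apply]; split_ifs <;> simp

lemma ext'_smul {n j : ℕ} (c : ℝ) (g : {A : Finset (Fin n) // A.card = j} → ℝ) :
    ext' (c • g) = c • ext' g := by
  funext A; simp only [ext', Pi.smul_apply]; split_ifs <;> simp

/-- Down as a linear map between level spaces. -/
noncomputable def DmapL (n a b : ℕ) :
    ({A : Finset (Fin n) // A.card = a} → ℝ) →ₗ[ℝ] ({A : Finset (Fin n) // A.card = b} → ℝ) where
  toFun g := fun R => dn (ext' g) R.1
  map_add' g g' := by funext R; simp only [dn, ext'_add, Pi.add_apply, sum_add_distrib]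
  map_smul' c g := by
    funext R
    simp only [dn, ext'_smul, Pi.smul_apply, smul_eq_mul, RingHom.id_apply, mul_sum]

/-- Up as a linear map between level spaces. -/
noncomputable def UmapL (n a b : ℕ) :
    ({A : Finset (Fin n) // A.card = a} → ℝ) →ₗ[ℝ] ({A : Finset (Fin n) // A.card = b} → ℝ) where
  toFun g := fun A => up (ext' g) A.1
  map_add' g g' := by funext A; simp only [up, ext'_add, Pi.add_apply, sum_add_distrib]
  map_smul' c g := by
    funext A
    simp only [up, ext'_smul, Pi.smul_apply, smul_eq_mul, RingHom.id_apply, mul_sum]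

lemma finrank_lev (n j : ℕ) :
    Module.finrank ℝ ({A : Finset (Fin n) // A.card = j} → ℝ) = n.choose j := by
  rw [Module.finrank_fintype_fun_eq_card, Fintype.card_finset_len, Fintype.card_fin]

lemma DU_inj (n a : ℕ) (h2 : 2*a < n) :
    Function.Injective ((DmapL n (a+1) a) ∘ₗ (UmapL n a (a+1))) := by
  rw [← LinearMap.ker_eq_bot, Submodule.eq_bot_iff]
  intro f hf0
  rw [LinearMap.mem_ker] at hf0
  set F := ext' f with hF
  have hDU : ∀ R : Finset (Fin n), R.card = a → dn (up F) R = 0 := by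
    intro R hR
    have h := congrFun hf0 ⟨R, hR⟩
    simp only [LinearMap.comp_apply, DmapL, LinearMap.coe_mk, AddHom.coe_mk,
      Pi.zero_apply] at h
    rw [← h, dn, dn]
    refine sum_congr rfl fun i hi => ?_
    have hcard : (insert i R).card = a + 1 := by
      rw [card_insert_of_notMem (mem_compl.mp hi), hR]
    simp only [ext', dif_pos hcard, UmapL, LinearMap.coe_mk, AddHom.coe_mk, hF]
  have h0 : ∀ A : Finset (Fin n), A.card = a+1 → up F A = 0 := by
    have hsum : ∑ A ∈ (univ : Finset (Fin n)).powersetCard (a+1), up F A * up F A = 0 := by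
      rw [adj a F (up F)]
      exact sum_eq_zero fun R hR => by
        rw [hDU R (mem_powersetCard_univ.mp hR), mul_zero]
    intro A hA
    exact mul_self_eq_zero.mp
      ((sum_eq_zero_iff_of_nonneg (fun x _ => mul_self_nonneg _)).mp hsum A
        (mem_powersetCard_univ.mpr hA))
  have hF0 := up_inj a h2 F h0
  funext x
  have := hF0 x.1 x.2
  rwa [hF, ext', dif_pos x.2] at this

end MidProof


open MidProof

/-- Let `n = 2k+1` with `k ≥ 1` and `1 ≤ r ≤ k`. The image under `Φ` of the constraint
space is a vector space of dimension `C(n, r) − C(n, r−1)`; equivalently, `Φ` is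
injective on the constraint space. -/
theorem Phi_image_finrank (k r : ℕ) (hk : 1 ≤ k) (hr : 1 ≤ r) (hrk : r ≤ k) :
    Module.finrank ℝ
        (Submodule.map (Phi (2 * k + 1) k r) (constraintSpace (2 * k + 1) r hr)) =
      (2 * k + 1).choose r - (2 * k + 1).choose (r - 1) ∧
    Set.InjOn (Phi (2 * k + 1) k r) (constraintSpace (2 * k + 1) r hr) := by
  obtain ⟨a, rfl⟩ : ∃ a, r = a + 1 := ⟨r - 1, by omega⟩
  set n := 2 * k + 1 with hn
  have hmem : ∀ g, g ∈ constraintSpace n (a+1) hr ↔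
      ∀ C : Finset (Fin n), C.card = a → dn (ext' g) C = 0 := by
    intro g
    constructor
    · intro hg C hC
      have h := hg C hC
      rw [dn, ← Finset.sum_attach Cᶜ (fun i => ext' g (insert i C)), ← h]
      refine sum_congr rfl fun i _ => ?_
      rw [ext', dif_pos]
    · intro hg C hC
      have h := hg C hC
      rw [dn, ← Finset.sum_attach Cᶜ (fun i => ext' g (insert i C))] at h
      rw [← h]
      refine sum_congr rfl fun i _ => ?_
      rw [ext', dif_pos]
  have hker : constraintSpace n (a+1) hr = LinearMap.ker (DmapL n (a+1) a) := by
    ext g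
    rw [hmem g, LinearMap.mem_ker]
    constructor
    · intro h
      funext R
      simp only [DmapL, LinearMap.coe_mk, AddHom.coe_mk, Pi.zero_apply]
      exact h R.1 R.2
    · intro h C hC
      have := congrFun h ⟨C, hC⟩
      simpa only [DmapL, LinearMap.coe_mk, AddHom.coe_mk, Pi.zero_apply] using this
  have hPhiT : ∀ g (A : MidVert n k),
      Phi n k (a+1) g A = ∑ B ∈ A.1.powersetCard (a+1), ext' g B := by
    intro g A
    show ∑ B ∈ (A.1.powersetCard (a+1)).attach,
        g ⟨B.1, (Finset.mem_powersetCard.mp B.2).2⟩ = _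
    rw [← Finset.sum_attach (A.1.powersetCard (a+1)) (fun B => ext' g B)]
    refine sum_congr rfl fun B _ => ?_
    rw [ext', dif_pos (Finset.mem_powersetCard.mp B.2).2]
  have inj0 : ∀ g ∈ constraintSpace n (a+1) hr, Phi n k (a+1) g = 0 → g = 0 := by
    intro g hg hP
    have hG := (hmem g).mp hg
    have hTk : ∀ A : Finset (Fin n), A.card = k →
        ∑ B ∈ A.powersetCard (a+1), ext' g B = 0 := by
      intro A hA
      rw [← hPhiT g ⟨A, Or.inl hA⟩, hP]
      rfl
    have hstep : ∀ j : ℕ, j ≤ k - (a+1) →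
        ∀ A : Finset (Fin n), A.card = k - j →
          ∑ B ∈ A.powersetCard (a+1), ext' g B = 0 := by
      intro j
      induction j with
      | zero => intro _ A hA; exact hTk A (by simpa using hA)
      | succ m ih =>
        intro hm A hA
        have hdn : dn (fun A => ∑ B ∈ A.powersetCard (a+1), ext' g B) A = 0 := by
          rw [dn]
          refine sum_eq_zero fun i hi => ?_
          refine ih (by omega) _ ?_
          rw [card_insert_of_notMem (mem_compl.mp hi), hA]
          omega
        rw [dn_T a (ext' g) hG A] at hdn
        have hAk : A.card ≤ k := by rw [hA]; omega
        have hak : a + 1 ≤ k := by omega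
        have hcoef : ((n:ℝ) - A.card - (a+1)) ≠ 0 := by
          have h1 : (A.card : ℝ) ≤ k := by exact_mod_cast hAk
          have h2 : ((a:ℝ) + 1) ≤ k := by exact_mod_cast hak
          have hn' : (n : ℝ) = 2*k+1 := by rw [hn]; push_cast; ring
          have : (0:ℝ) < (n:ℝ) - A.card - (a+1) := by rw [hn']; linarith
          linarith
        exact (mul_eq_zero.mp hdn).resolve_left hcoef
    have hfin := hstep (k - (a+1)) le_rfl
    funext x
    obtain ⟨X, hX⟩ := x
    have hx : X.card = k - (k - (a+1)) := by rw [hX]; omega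
    have hz := hfin X hx
    have hps := powersetCard_self X
    rw [hX] at hps
    rw [hps, sum_singleton, ext', dif_pos hX] at hz
    simpa using hz
  constructor
  · have hres : LinearMap.ker
        ((Phi n k (a+1)).domRestrict (constraintSpace n (a+1) hr)) = ⊥ := by
      rw [Submodule.eq_bot_iff]
      rintro ⟨g, hg⟩ hgk
      rw [LinearMap.mem_ker, LinearMap.domRestrict_apply] at hgk
      exact Subtype.ext (inj0 g hg hgk)
    have h1 := LinearMap.finrank_range_add_finrank_ker
      ((Phi n k (a+1)).domRestrict (constraintSpace n (a+1) hr))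
    rw [hres, finrank_bot, add_zero, LinearMap.range_domRestrict] at h1
    have hsurj : Function.Surjective (DmapL n (a+1) a) := by
      have hinj := DU_inj n a (by omega)
      have hsurj' := LinearMap.injective_iff_surjective.mp hinj
      intro y
      obtain ⟨x, hx⟩ := hsurj' y
      exact ⟨UmapL n a (a+1) x, hx⟩
    have h2 := LinearMap.finrank_range_add_finrank_ker (DmapL n (a+1) a)
    rw [LinearMap.range_eq_top.mpr hsurj, finrank_top, finrank_lev, finrank_lev] at h2
    rw [h1, hker]
    simp only [Nat.add_sub_cancel]
    omega
  · intro g1 hg1 g2 hg2 hgg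
    have h12 : g1 - g2 ∈ constraintSpace n (a+1) hr :=
      sub_mem (SetLike.mem_coe.mp hg1) (SetLike.mem_coe.mp hg2)
    have hz : Phi n k (a+1) (g1 - g2) = 0 := by
      rw [map_sub]
      exact sub_eq_zero.mpr hgg
    exact sub_eq_zero.mp (inj0 _ h12 hz)
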